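/- Let S be a binomial generating set of the lattice ideal I_L and F an I_L-fiber. Then I_{<F̄} = ⟨B : B ∈ S, F̄_B <_I F̄⟩ and I_{≤F̄} = ⟨B : B ∈ S, F̄_B ≤_I F̄⟩. -/

import Mathlib

open MvPolynomial

noncomputable section

/-- The integer vector associated to a natural exponent vector. -/
def natVec {ι : Type*} (u : ι →₀ ℕ) : ι → ℤ := fun i => (u i : ℤ)

/-- The lattice ideal `I_L` of a lattice `L ⊆ ℤ^ι` in `k[x_i : i ∈ ι]`. -/
def latticeIdeal (k : Type*) [Field k] {ι : Type*} (L : Submodule ℤ (ι → ℤ)) :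
    Ideal (MvPolynomial ι k) :=
  Ideal.span {f | ∃ u v : ι →₀ ℕ, natVec u - natVec v ∈ L ∧
    f = monomial u (1 : k) - monomial v 1}

/-- `f` is a binomial `x^u - x^v` belonging to the lattice ideal `I_L`. -/
def IsLatticeBinomial (k : Type*) [Field k] {ι : Type*} (L : Submodule ℤ (ι → ℤ))
    (f : MvPolynomial ι k) : Prop :=
  ∃ u v : ι →₀ ℕ, natVec u - natVec v ∈ L ∧ f = monomial u (1 : k) - monomial v 1

/-- The `I_L`-fiber of `u` : all exponent vectors `v` with `v - u ∈ L`. -/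
def fiber {ι : Type*} (L : Submodule ℤ (ι → ℤ)) (u : ι →₀ ℕ) : Set (ι →₀ ℕ) :=
  {v | natVec v - natVec u ∈ L}

/-- `L⁺ = L ∩ ℕ^ι`. -/
def Lplus {ι : Type*} (L : Submodule ℤ (ι → ℤ)) : Set (ι → ℤ) :=
  {w | w ∈ L ∧ ∀ i, 0 ≤ w i}

/-- `L_pure`, the subgroup of `L` generated by `L⁺`. -/
def Lpure {ι : Type*} (L : Submodule ℤ (ι → ℤ)) : Submodule ℤ (ι → ℤ) :=
  Submodule.span ℤ (Lplus L)

/-- `σ_L`, the union of the supports of elements of `L⁺`. -/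
def sigmaL {ι : Type*} (L : Submodule ℤ (ι → ℤ)) : Set ι :=
  {i | ∃ w ∈ Lplus L, w i ≠ 0}

/-- `F̄ ≤_I Ḡ` : some translate of `F` is contained in `G`. -/
def fiberLE {ι : Type*} (F G : Set (ι →₀ ℕ)) : Prop :=
  ∃ t : ι →₀ ℕ, (fun v => t + v) '' F ⊆ G

/-- `F ≡_I G` : equivalence of fibers. -/
def fiberEquiv {ι : Type*} (F G : Set (ι →₀ ℕ)) : Prop :=
  fiberLE F G ∧ fiberLE G F

/-- `F̄ <_I Ḡ`. -/
def fiberLT {ι : Type*} (F G : Set (ι →₀ ℕ)) : Prop :=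
  fiberLE F G ∧ ¬ fiberEquiv F G

/-- The ideal `I_{<F̄}` generated by binomials of `I_L` whose fiber class is `<_I F̄`. -/
def idealLT (k : Type*) [Field k] {ι : Type*} (L : Submodule ℤ (ι → ℤ))
    (F : Set (ι →₀ ℕ)) : Ideal (MvPolynomial ι k) :=
  Ideal.span {f | ∃ u v : ι →₀ ℕ, natVec u - natVec v ∈ L ∧
    f = monomial u (1 : k) - monomial v 1 ∧ fiberLT (fiber L u) F}

/-- The ideal `I_{≤F̄}` generated by binomials of `I_L` whose fiber class is `≤_I F̄`. -/
def idealLE (k : Type*) [Field k] {ι : Type*} (L : Submodule ℤ (ι → ℤ))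
    (F : Set (ι →₀ ℕ)) : Ideal (MvPolynomial ι k) :=
  Ideal.span {f | ∃ u v : ι →₀ ℕ, natVec u - natVec v ∈ L ∧
    f = monomial u (1 : k) - monomial v 1 ∧ fiberLE (fiber L u) F}

/-- `μ(I_L)` : the least cardinality of a binomial generating set of `I_L`. -/
def muIdeal (k : Type*) [Field k] {ι : Type*} (L : Submodule ℤ (ι → ℤ)) : ℕ :=
  sInf {m | ∃ S : Finset (MvPolynomial ι k), S.card = m ∧
    (∀ f ∈ S, IsLatticeBinomial k L f) ∧
    Ideal.span (S : Set (MvPolynomial ι k)) = latticeIdeal k L}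

/-- A Markov basis of `I_L` : a binomial generating set of least cardinality `μ(I_L)`. -/
def IsMarkovBasis (k : Type*) [Field k] {ι : Type*} (L : Submodule ℤ (ι → ℤ))
    (S : Finset (MvPolynomial ι k)) : Prop :=
  (∀ f ∈ S, IsLatticeBinomial k L f) ∧
  Ideal.span (S : Set (MvPolynomial ι k)) = latticeIdeal k L ∧
  S.card = muIdeal k L

/-- `u` is an `L`-primitive vector : `u ≠ 0`, `u ∈ L`, and whenever `q • u ∈ L` for
a rational `q`, then `q` is an integer. -/
def IsLPrimitive {ι : Type*} (L : Submodule ℤ (ι → ℤ)) (u : ι → ℤ) : Prop :=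
  u ≠ 0 ∧ u ∈ L ∧ ∀ (q : ℚ) (w : ι → ℤ), w ∈ L →
    (∀ i, (w i : ℚ) = q * (u i : ℚ)) → ∃ m : ℤ, q = (m : ℚ)

/-- Projection onto the coordinates in `σ_L`. -/
def projSigma {n : ℕ} (L : Submodule ℤ (Fin n → ℤ)) :
    (Fin n → ℤ) →ₗ[ℤ] ({i : Fin n // i ∈ sigmaL L} → ℤ) :=
  LinearMap.pi fun j => LinearMap.proj j.1

/-- Projection onto the coordinates outside `σ_L` (giving `u ↦ u^σ`). -/
def projCompl {n : ℕ} (L : Submodule ℤ (Fin n → ℤ)) :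
    (Fin n → ℤ) →ₗ[ℤ] ({i : Fin n // i ∉ sigmaL L} → ℤ) :=
  LinearMap.pi fun j => LinearMap.proj j.1

/-- An indispensable binomial: it appears, up to a constant multiple, in every Markov basis. -/
def IsIndispensableBinomial (k : Type*) [Field k] {ι : Type*} (L : Submodule ℤ (ι → ℤ))
    (f : MvPolynomial ι k) : Prop :=
  ∀ S : Finset (MvPolynomial ι k), IsMarkovBasis k L S → ∃ c : k, c ≠ 0 ∧ c • f ∈ S

/-- An indispensable monomial: every Markov basis contains a binomial having it as a term. -/
def IsIndispensableMonomial (k : Type*) [Field k] {ι : Type*} (L : Submodule ℤ (ι → ℤ))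
    (u : ι →₀ ℕ) : Prop :=
  ∀ S : Finset (MvPolynomial ι k), IsMarkovBasis k L S → ∃ f ∈ S, ∃ v : ι →₀ ℕ,
    f = monomial u (1 : k) - monomial v 1 ∨ f = monomial v (1 : k) - monomial u 1

lemma natVec_add {ι : Type*} (a b : ι →₀ ℕ) : natVec (a + b) = natVec a + natVec b := by
  funext i; simp [natVec]

lemma fiberLE_trans {ι : Type*} {F G H : Set (ι →₀ ℕ)} (h1 : fiberLE F G) (h2 : fiberLE G H) :
    fiberLE F H := by
  obtain ⟨t, ht⟩ := h1
  obtain ⟨s, hs⟩ := h2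
  refine ⟨s + t, ?_⟩
  rintro x ⟨y, hy, rfl⟩
  have : s + (t + y) ∈ H := hs ⟨t + y, ht ⟨y, hy, rfl⟩, rfl⟩
  show s + t + y ∈ H
  rwa [add_assoc]

/-- If a translate of `a` lies in the fiber of `u`, then `fiber a ≤ fiber u`. -/
lemma fiberLE_of_mem {ι : Type*} (L : Submodule ℤ (ι → ℤ)) {m a u : ι →₀ ℕ}
    (h : m + a ∈ fiber L u) : fiberLE (fiber L a) (fiber L u) := by
  refine ⟨m, ?_⟩
  rintro x ⟨y, hy, rfl⟩
  have hy' : natVec y - natVec a ∈ L := hy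
  have h' : natVec (m + a) - natVec u ∈ L := h
  have : natVec (m + y) - natVec u ∈ L := by
    have := L.add_mem hy' h'
    have e : natVec (m + y) - natVec u
        = (natVec y - natVec a) + (natVec (m + a) - natVec u) := by
      rw [natVec_add, natVec_add]; ring
    rwa [e]
  exact this

/-- The key span lemma: for any predicate on fibers which descends along `fiberLE`,
the ideal generated by all lattice binomials with property `P` equals the ideal
generated by members of `S` with property `P`. -/
lemma key_span (k : Type*) [Field k] {n : ℕ} (L : Submodule ℤ (Fin n → ℤ))
    (S : Set (MvPolynomial (Fin n) k))
    (hSbin : ∀ f ∈ S, IsLatticeBinomial k L f)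
    (hSgen : Ideal.span S = latticeIdeal k L)
    (P : Set (Fin n →₀ ℕ) → Prop)
    (hP : ∀ a u : Fin n →₀ ℕ, fiberLE (fiber L a) (fiber L u) → P (fiber L u) → P (fiber L a)) :
    Ideal.span {f | ∃ u v : Fin n →₀ ℕ, natVec u - natVec v ∈ L ∧
        f = monomial u (1 : k) - monomial v 1 ∧ P (fiber L u)} =
      Ideal.span {f | f ∈ S ∧ ∃ u v : Fin n →₀ ℕ, natVec u - natVec v ∈ L ∧
        f = monomial u (1 : k) - monomial v 1 ∧ P (fiber L u)} := by
  classical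
  set T : Set (MvPolynomial (Fin n) k) :=
    {f | f ∈ S ∧ ∃ u v : Fin n →₀ ℕ, natVec u - natVec v ∈ L ∧
        f = monomial u (1 : k) - monomial v 1 ∧ P (fiber L u)} with hT
  apply le_antisymm
  · -- hard direction
    rw [Ideal.span_le]
    rintro f ⟨u, v, hL, rfl, hPu⟩
    -- the projection onto the fiber of u
    set p : (Fin n →₀ ℕ) → Prop := fun m => m ∈ fiber L u with hp
    set π : MvPolynomial (Fin n) k → MvPolynomial (Fin n) k :=
      fun f => AddMonoidAlgebra.ofCoeff (Finsupp.filter p (AddMonoidAlgebra.coeff f)) with hπ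
    have hπadd : ∀ f g : MvPolynomial (Fin n) k, π (f + g) = π f + π g := by
      intro f g
      simp only [hπ, AddMonoidAlgebra.coeff_add, Finsupp.filter_add, AddMonoidAlgebra.ofCoeff_add]
    have hπsub : ∀ f g : MvPolynomial (Fin n) k, π (f - g) = π f - π g := by
      intro f g
      simp only [hπ, AddMonoidAlgebra.coeff_sub, Finsupp.filter_sub, AddMonoidAlgebra.ofCoeff_sub]
    have hπpos : ∀ (m : Fin n →₀ ℕ) (c : k), p m →
        π (monomial m c) = monomial m c := by
      intro m c h
      simp only [hπ, ← single_eq_monomial, AddMonoidAlgebra.coeff_single,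
        Finsupp.filter_single_of_pos _ h, AddMonoidAlgebra.ofCoeff_single]
    have hπneg : ∀ (m : Fin n →₀ ℕ) (c : k), ¬ p m → π (monomial m c) = 0 := by
      intro m c h
      simp only [hπ, ← single_eq_monomial, AddMonoidAlgebra.coeff_single,
        Finsupp.filter_single_of_neg _ h, AddMonoidAlgebra.ofCoeff_zero]
    -- each product g * s for s ∈ S projects into the span of T
    have lemA : ∀ s ∈ S, ∀ g : MvPolynomial (Fin n) k,
        π (g * s) ∈ Ideal.span T := by
      intro s hs g
      obtain ⟨a, b, hab, rfl⟩ := hSbin s hs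
      induction g using MvPolynomial.induction_on' with
      | add q r hq hr =>
        rw [add_mul]
        rw [hπadd]
        exact Ideal.add_mem _ hq hr
      | monomial m c =>
        have expand : (monomial m c : MvPolynomial (Fin n) k) *
            (monomial a (1 : k) - monomial b 1)
            = monomial (m + a) c - monomial (m + b) c := by
          rw [mul_sub, monomial_mul, monomial_mul, mul_one]
        rw [expand, hπsub]
        by_cases hma : p (m + a)
        · have hmb : p (m + b) := by
            have hma' : natVec (m + a) - natVec u ∈ L := hma
            have : natVec (m + b) - natVec u ∈ L := by
              have e : natVec (m + b) - natVec u
                  = (natVec (m + a) - natVec u) - (natVec a - natVec b) := by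
                rw [natVec_add, natVec_add]; ring
              rw [e]; exact L.sub_mem hma' hab
            exact this
          rw [hπpos _ _ hma, hπpos _ _ hmb, ← expand]
          have hsT : (monomial a (1 : k) - monomial b 1) ∈ T :=
            ⟨hs, a, b, hab, rfl, hP a u (fiberLE_of_mem L hma) hPu⟩
          exact Ideal.mul_mem_left _ _ (Ideal.subset_span hsT)
        · have hmb : ¬ p (m + b) := by
            intro hmb
            apply hma
            have hmb' : natVec (m + b) - natVec u ∈ L := hmb
            have : natVec (m + a) - natVec u ∈ L := by
              have e : natVec (m + a) - natVec u
                  = (natVec (m + b) - natVec u) + (natVec a - natVec b) := by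
                rw [natVec_add, natVec_add]; ring
              rw [e]; exact L.add_mem hmb' hab
            exact this
          rw [hπneg _ _ hma, hπneg _ _ hmb, sub_zero]
          exact Ideal.zero_mem _
    -- f belongs to the lattice ideal, hence to span S
    have hf : (monomial u (1 : k) - monomial v 1) ∈ Ideal.span S := by
      rw [hSgen]
      exact Ideal.subset_span ⟨u, v, hL, rfl⟩
    obtain ⟨c, hcsupp, hcsum⟩ := Submodule.mem_span_set.mp hf
    -- π fixes f
    have hπf : π (monomial u (1 : k) - monomial v 1) = monomial u (1 : k) - monomial v 1 := by
      have hu : p u := by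
        show natVec u - natVec u ∈ L
        simp
      have hv : p v := by
        show natVec v - natVec u ∈ L
        have : natVec v - natVec u = -(natVec u - natVec v) := by ring
        rw [this]; exact L.neg_mem hL
      rw [hπsub, hπpos u 1 hu, hπpos v 1 hv]
    rw [← hπf, ← hcsum]
    have : π (c.sum fun mi r => r • mi) = c.sum fun mi r => π (r • mi) := by
      exact map_finsuppSum (⟨⟨π, by have h0 := hπsub 0 0; rwa [sub_self, sub_self] at h0⟩, hπadd⟩ :
        MvPolynomial (Fin n) k →+ MvPolynomial (Fin n) k) c _
    rw [this]
    refine Submodule.sum_mem _ ?_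
    intro s hsupp
    have hsS : s ∈ S := hcsupp hsupp
    show π ((c s) • s) ∈ Ideal.span T
    have h : (c s) • s = (c s) * s := rfl
    rw [h]
    exact lemA s hsS (c s)
  · apply Ideal.span_mono
    rintro f ⟨_, u, v, h1, h2, h3⟩
    exact ⟨u, v, h1, h2, h3⟩

/-- for any binomial generating set `S` of `I_L` and any fiber `F`,
`I_{<F̄}` (resp. `I_{≤F̄}`) is generated by the elements of `S` whose fiber class is
`<_I F̄` (resp. `≤_I F̄`). -/
theorem stmt11 (k : Type*) [Field k] {n : ℕ} (L : Submodule ℤ (Fin n → ℤ))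
    (S : Set (MvPolynomial (Fin n) k))
    (hSbin : ∀ f ∈ S, IsLatticeBinomial k L f)
    (hSgen : Ideal.span S = latticeIdeal k L)
    (w : Fin n →₀ ℕ) :
    idealLT k L (fiber L w) =
      Ideal.span {f | f ∈ S ∧ ∃ u v : Fin n →₀ ℕ, natVec u - natVec v ∈ L ∧
        f = monomial u (1 : k) - monomial v 1 ∧ fiberLT (fiber L u) (fiber L w)} ∧
    idealLE k L (fiber L w) =
      Ideal.span {f | f ∈ S ∧ ∃ u v : Fin n →₀ ℕ, natVec u - natVec v ∈ L ∧
        f = monomial u (1 : k) - monomial v 1 ∧ fiberLE (fiber L u) (fiber L w)} := by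
  constructor
  · exact key_span k L S hSbin hSgen (fun F => fiberLT F (fiber L w)) (by
      intro a u hle ⟨hle', hne⟩
      refine ⟨fiberLE_trans hle hle', ?_⟩
      rintro ⟨-, hwa⟩
      exact hne ⟨hle', fiberLE_trans hwa hle⟩)
  · exact key_span k L S hSbin hSgen (fun F => fiberLE F (fiber L w)) (by
      intro a u hle hle'
      exact fiberLE_trans hle hle')
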